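/- Let ζ ∈ ℝ and ω ∈ ℂ with 0 < Im ω < 1/2. Then cosh(2π(ζ + Re ω)) − cos(2π Im ω) > 0, sinh(π(ζ+ω)) ≠ 0, and Im( e^{πζ}·cosh(πω)/sinh(π(ζ+ω)) ) = −e^{πζ}·cosh(πζ)·sin(2π Im ω) / ( cosh(2π(ζ + Re ω)) − cos(2π Im ω) ); in particular this imaginary part is strictly negative. -/

import Mathlib

open MeasureTheory

noncomputable section

/-- The dilogarithm `Li₂(z) = -∫₀¹ Log(1 - t z) dt / t` (principal branch of `Log`). -/
def Li2 (z : ℂ) : ℂ := -∫ t in (0:ℝ)..1, Complex.log (1 - (t:ℂ) * z) / (t:ℂ)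

/-- Negative-index polylogarithms: `LiNeg m = Li_{-m}`, with `Li₀(w) = w/(1-w)` and
`Li_{-m}(w) = w ⬝ d/dw Li_{-m+1}(w)`. -/
def LiNeg : ℕ → ℂ → ℂ
  | 0 => fun w => w / (1 - w)
  | (m+1) => fun w => w * deriv (LiNeg m) w

/-- `LiIdx n = Li_{2-2n}`: the dilogarithm for `n = 0`, and `Li_{-(2n-2)}` for `n ≥ 1`. -/
def LiIdx (n : ℕ) : ℂ → ℂ := if n = 0 then Li2 else LiNeg (2*n - 2)

/-- `L_b(z) = i ∫₀^∞ ( sin(2yz)/(2 sinh(y/b) sinh(by)) - z/y ) dy/y`. -/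
def Lb (b : ℝ) (z : ℂ) : ℂ :=
  Complex.I * ∫ y in Set.Ioi (0:ℝ),
    (Complex.sin (2 * (y:ℂ) * z) / (2 * (Real.sinh (y / b) : ℂ) * (Real.sinh (b * y) : ℂ))
      - z / (y:ℂ)) / (y:ℂ)

/-- Ruijsenaars' hyperbolic gamma function `s_b(z) = exp(L_b(z))`. -/
def sb (b : ℝ) (z : ℂ) : ℂ := Complex.exp (Lb b z)

/-- `Q = b + b⁻¹` as a complex number. -/
def Qb (b : ℝ) : ℂ := (b:ℂ) + (b:ℂ)⁻¹

/-- The function `𝓜(b, ζ', ω')`, the contour being the horizontal line `Im = -Q/4`. -/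
def Mfun (b : ℝ) (ζ : ℝ) (ω : ℂ) : ℂ :=
  sb b ζ * ∫ x : ℝ,
    Complex.exp (Complex.I * (Real.pi:ℂ) * ((x:ℂ) - Complex.I * Qb b / 4)
        * ((ζ:ℂ) - Complex.I * Qb b / 2 + 2 * ω)) *
      sb b ((x:ℂ) - Complex.I * Qb b / 4 - (ζ:ℂ))
        / sb b ((x:ℂ) - Complex.I * Qb b / 4 + Complex.I * Qb b / 2)

/-- The exponent `f_𝓜(ζ, ω)`. -/
def fM (ζ : ℝ) (ω : ℂ) : ℂ :=
  -(Li2 (-Complex.exp (2 * (Real.pi:ℂ) * (ζ:ℂ)))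
    + Li2 (-(Complex.exp (-((Real.pi:ℂ) * (ζ:ℂ))) * Complex.cosh ((Real.pi:ℂ) * ω)
        / Complex.sinh ((Real.pi:ℂ) * ((ζ:ℂ) + ω))))
    - Li2 (Complex.exp ((Real.pi:ℂ) * (ζ:ℂ)) * Complex.cosh ((Real.pi:ℂ) * ω)
        / Complex.sinh ((Real.pi:ℂ) * ((ζ:ℂ) + ω))))
    / (2 * (Real.pi:ℂ) * Complex.I)
  + Complex.I * (Real.pi:ℂ) * (ζ:ℂ)^2
  + Complex.I * (ω - Complex.I / 2) *
      Complex.log (Complex.exp ((Real.pi:ℂ) * (ζ:ℂ)) * Complex.cosh ((Real.pi:ℂ) * ω)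
        / Complex.sinh ((Real.pi:ℂ) * ((ζ:ℂ) + ω)))
  + Complex.I * (Real.pi:ℂ) / 6

/-- The function `𝓠(b, σ', μ')`, the contour being the horizontal line `Im = -3Q/8`. -/
def Qfun (b : ℝ) (σ μ : ℝ) : ℂ :=
  Complex.exp (Complex.I * (Real.pi:ℂ) *
      (1/6 + 7 * (Qb b)^2 / 24 - (μ:ℂ)^2/2 + Complex.I * (μ:ℂ) * Qb b - (σ:ℂ)^2)) * sb b μ *
  ∫ x : ℝ,
    Complex.exp (-(Complex.I * (Real.pi:ℂ) * ((x:ℂ) - 3 * Complex.I * Qb b / 8)^2)) *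
    Complex.exp (2 * Complex.I * (Real.pi:ℂ) * ((x:ℂ) - 3 * Complex.I * Qb b / 8)
      * ((μ:ℂ) - Complex.I * Qb b / 2)) *
    sb b ((x:ℂ) - 3 * Complex.I * Qb b / 8 + (σ:ℂ)) *
    sb b ((x:ℂ) - 3 * Complex.I * Qb b / 8 - (σ:ℂ))

/-- The exponent `f_𝓠(σ, μ)`. -/
def fQ (σ μ : ℝ) : ℂ :=
  -(Li2 (-Complex.exp (2 * (Real.pi:ℂ) * (μ:ℂ)))) / (2 * (Real.pi:ℂ) * Complex.I)
  - Li2 (Complex.exp (-(2 * (Real.pi:ℂ) * (σ:ℂ))) *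
      ((Real.cosh (2*Real.pi*σ) : ℂ) + Complex.I *
        (Real.sqrt (Real.exp (2*Real.pi*μ) - Real.sinh (2*Real.pi*σ)^2) : ℂ)))
    / (2 * (Real.pi:ℂ) * Complex.I)
  - Li2 (Complex.exp (2 * (Real.pi:ℂ) * (σ:ℂ)) *
      ((Real.cosh (2*Real.pi*σ) : ℂ) + Complex.I *
        (Real.sqrt (Real.exp (2*Real.pi*μ) - Real.sinh (2*Real.pi*σ)^2) : ℂ)))
    / (2 * (Real.pi:ℂ) * Complex.I)
  + (1/2 + Complex.I * (μ:ℂ)) *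
      Complex.log (-(Real.cosh (2*Real.pi*σ) : ℂ) - Complex.I *
        (Real.sqrt (Real.exp (2*Real.pi*μ) - Real.sinh (2*Real.pi*σ)^2) : ℂ))
  - (Real.pi:ℂ) * (μ:ℂ) + 5 * (Real.pi:ℂ) * Complex.I / 12

/-- The phase function `f(t)` of the saddle point analysis of `𝓜`. -/
def fMt (ζ : ℝ) (ω t : ℂ) : ℂ :=
  -(Li2 (-Complex.exp (2*(Real.pi:ℂ)*(ζ:ℂ)))
    + Li2 (-Complex.exp (2*(Real.pi:ℂ)*(t-(ζ:ℂ))))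
    - Li2 (-Complex.exp (2*(Real.pi:ℂ)*(t+Complex.I/2)))) / (2*(Real.pi:ℂ)*Complex.I)
  + Complex.I*(Real.pi:ℂ)*(ζ:ℂ)^2 + 2*Complex.I*(Real.pi:ℂ)*t*ω + (Real.pi:ℂ)*t
  + Complex.I*(Real.pi:ℂ)/6

/-- The amplitude `g(t)` of the saddle point analysis of `𝓜`. -/
def gM (t : ℂ) : ℂ :=
  Complex.exp ((Real.pi:ℂ)*t - Complex.log (1 - Complex.exp (2*(Real.pi:ℂ)*t)) / 2)

/-- The error term `E(τ, t)` from the semiclassical analysis of `𝓜`. -/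
def Efun (ζ τ : ℝ) (t : ℂ) : ℂ :=
  Complex.I * (Li2 (Complex.exp (2*(Real.pi:ℂ)*t))
      - Li2 (Complex.exp (Complex.I*(Real.pi:ℂ)*(τ:ℂ) + 2*(Real.pi:ℂ)*t))) / (2*(Real.pi:ℂ)*(τ:ℂ))
  + Complex.log (1 - Complex.exp (2*(Real.pi:ℂ)*t)) / 2
  + (Complex.I*(Real.pi:ℂ)*(τ:ℂ)/12) *
      (Complex.exp (2*(Real.pi:ℂ)*t + Complex.I*(Real.pi:ℂ)*(τ:ℂ))
          / (Complex.exp (2*(Real.pi:ℂ)*t + Complex.I*(Real.pi:ℂ)*(τ:ℂ)) - 1)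
        - Complex.exp (2*(Real.pi:ℂ)*(ζ:ℂ)) / (Complex.exp (2*(Real.pi:ℂ)*(ζ:ℂ)) + 1)
        - Complex.exp (2*(Real.pi:ℂ)*t)
          / (Complex.exp (2*(Real.pi:ℂ)*(ζ:ℂ)) + Complex.exp (2*(Real.pi:ℂ)*t)) + 2)

/-- The phase function `f(t)` of the saddle point analysis of `𝓠`. -/
def fQt (σ μ : ℝ) (t : ℂ) : ℂ :=
  -(Li2 (-Complex.exp (2*(Real.pi:ℂ)*(μ:ℂ)))
    + Li2 (-Complex.exp (2*(Real.pi:ℂ)*(t-(σ:ℂ))))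
    + Li2 (-Complex.exp (2*(Real.pi:ℂ)*(t+(σ:ℂ))))) / (2*(Real.pi:ℂ)*Complex.I)
  + 2*Complex.I*(Real.pi:ℂ)*(μ:ℂ)*t + (Real.pi:ℂ)*(t-(μ:ℂ)) + 5*Complex.I*(Real.pi:ℂ)/12

/-- The amplitude `g(t)` of the saddle point analysis of `𝓠`. -/
def gQ (μ : ℝ) (t : ℂ) : ℂ := Complex.exp ((Real.pi:ℂ)*(t-(μ:ℂ)))

end

/-- the imaginary part of `e^{πζ} cosh(πω)/sinh(π(ζ+ω))` is
strictly negative for `ζ ∈ ℝ` and `0 < Im ω < 1/2`. -/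

lemma sinh_mk (a b : ℝ) : Complex.sinh ((a:ℂ) + (b:ℂ)*Complex.I)
    = (Real.sinh a * Real.cos b : ℝ) + (Real.cosh a * Real.sin b : ℝ)*Complex.I := by
  rw [Complex.sinh_add, Complex.sinh_mul_I, Complex.cosh_mul_I,
    ← Complex.ofReal_sinh, ← Complex.ofReal_cosh, ← Complex.ofReal_cos, ← Complex.ofReal_sin]
  push_cast; ring

lemma cosh_mk (a b : ℝ) : Complex.cosh ((a:ℂ) + (b:ℂ)*Complex.I)
    = (Real.cosh a * Real.cos b : ℝ) + (Real.sinh a * Real.sin b : ℝ)*Complex.I := by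
  rw [Complex.cosh_add, Complex.sinh_mul_I, Complex.cosh_mul_I,
    ← Complex.ofReal_sinh, ← Complex.ofReal_cosh, ← Complex.ofReal_cos, ← Complex.ofReal_sin]
  push_cast; ring


theorem M_saddle_argument_lower_half_plane (ζ : ℝ) (ω : ℂ)
    (hω1 : 0 < ω.im) (hω2 : ω.im < 1/2) :
    0 < Real.cosh (2*Real.pi*(ζ + ω.re)) - Real.cos (2*Real.pi*ω.im) ∧
    Complex.sinh ((Real.pi:ℂ)*((ζ:ℂ)+ω)) ≠ 0 ∧
    (Complex.exp ((Real.pi:ℂ)*(ζ:ℂ)) * Complex.cosh ((Real.pi:ℂ)*ω)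
        / Complex.sinh ((Real.pi:ℂ)*((ζ:ℂ)+ω))).im
      = -(Real.exp (Real.pi*ζ) * Real.cosh (Real.pi*ζ) * Real.sin (2*Real.pi*ω.im))
          / (Real.cosh (2*Real.pi*(ζ + ω.re)) - Real.cos (2*Real.pi*ω.im)) ∧
    (Complex.exp ((Real.pi:ℂ)*(ζ:ℂ)) * Complex.cosh ((Real.pi:ℂ)*ω)
        / Complex.sinh ((Real.pi:ℂ)*((ζ:ℂ)+ω))).im < 0 := by
  set a : ℝ := Real.pi * (ζ + ω.re) with ha
  set b : ℝ := Real.pi * ω.im with hb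
  set p : ℝ := Real.pi * ω.re with hp
  have hω : (ω.re:ℂ) + (ω.im:ℂ)*Complex.I = ω := Complex.re_add_im ω
  have h1 : (Real.pi:ℂ)*((ζ:ℂ)+ω) = (a:ℂ) + (b:ℂ)*Complex.I := by
    rw [← hω]; push_cast [ha, hb]; ring
  have h2 : (Real.pi:ℂ)*ω = (p:ℂ) + (b:ℂ)*Complex.I := by
    rw [← hω]; push_cast [hp, hb]; ring
  -- trig facts
  have hsinb : 0 < Real.sin b := Real.sin_pos_of_pos_of_lt_pi (by positivity)
    (by rw [hb]; nlinarith [Real.pi_pos])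
  have hsin2 : 0 < Real.sin (2*Real.pi*ω.im) := Real.sin_pos_of_pos_of_lt_pi
    (by positivity) (by nlinarith [Real.pi_pos])
  have hsq : Real.sin b ^ 2 + Real.cos b ^ 2 = 1 := Real.sin_sq_add_cos_sq b
  have hcoshsq : Real.cosh a ^ 2 = Real.sinh a ^ 2 + 1 := Real.cosh_sq a
  -- denominator
  have hden : Real.cosh (2*Real.pi*(ζ + ω.re)) - Real.cos (2*Real.pi*ω.im)
      = 2 * (Real.sinh a ^ 2 + Real.sin b ^ 2) := by
    have e1 : 2*Real.pi*(ζ + ω.re) = 2*a := by rw [ha]; ring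
    have e2 : 2*Real.pi*ω.im = 2*b := by rw [hb]; ring
    rw [e1, e2, Real.cosh_two_mul, Real.cos_two_mul']
    nlinarith
  have hpos : 0 < Real.sinh a ^ 2 + Real.sin b ^ 2 := by positivity
  have hden_pos : 0 < Real.cosh (2*Real.pi*(ζ + ω.re)) - Real.cos (2*Real.pi*ω.im) := by
    rw [hden]; linarith
  have hne : Complex.sinh ((Real.pi:ℂ)*((ζ:ℂ)+ω)) ≠ 0 := by
    rw [h1, sinh_mk]
    intro h
    have him : Real.cosh a * Real.sin b = 0 := by
      have := congrArg Complex.im h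
      simp only [Complex.add_im, Complex.ofReal_im, Complex.mul_im, Complex.ofReal_re,
        Complex.I_re, Complex.I_im, Complex.zero_im] at this
      linarith
    have : 0 < Real.cosh a * Real.sin b := by positivity
    linarith
  have h3 : (Real.pi:ℂ)*(ζ:ℂ) = ((Real.pi*ζ:ℝ):ℂ) := by push_cast; ring
  have heq : (Complex.exp ((Real.pi:ℂ)*(ζ:ℂ)) * Complex.cosh ((Real.pi:ℂ)*ω)
        / Complex.sinh ((Real.pi:ℂ)*((ζ:ℂ)+ω))).im
      = -(Real.exp (Real.pi*ζ) * Real.cosh (Real.pi*ζ) * Real.sin (2*Real.pi*ω.im))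
          / (Real.cosh (2*Real.pi*(ζ + ω.re)) - Real.cos (2*Real.pi*ω.im)) := by
    rw [h1, h2, sinh_mk, cosh_mk, h3, ← Complex.ofReal_exp]
    have hns : Complex.normSq ((Real.sinh a * Real.cos b : ℝ)
        + (Real.cosh a * Real.sin b : ℝ)*Complex.I)
        = Real.sinh a ^ 2 + Real.sin b ^ 2 := by
      rw [Complex.normSq_add_mul_I]
      nlinarith
    rw [Complex.div_im, hns]
    simp only [Complex.add_im, Complex.add_re, Complex.ofReal_re, Complex.ofReal_im,
      Complex.mul_im, Complex.mul_re, Complex.I_re, Complex.I_im]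
    have hkey : Real.exp (Real.pi*ζ) * (Real.sinh p * Real.sin b) * (Real.sinh a * Real.cos b)
        - Real.exp (Real.pi*ζ) * (Real.cosh p * Real.cos b) * (Real.cosh a * Real.sin b)
        = -(Real.exp (Real.pi*ζ) * Real.cosh (Real.pi*ζ) * Real.sin b * Real.cos b) := by
      have : Real.pi*ζ = a - p := by rw [ha, hp]; ring
      rw [this, Real.cosh_sub]; ring
    have hs2 : Real.sin (2*Real.pi*ω.im) = 2 * Real.sin b * Real.cos b := by
      have : 2*Real.pi*ω.im = 2*b := by rw [hb]; ring
      rw [this, Real.sin_two_mul]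
    rw [hden, hs2]
    rw [div_sub_div_same]
    rw [div_eq_div_iff (by positivity) (by positivity)]
    linear_combination (2*(Real.sinh a^2 + Real.sin b^2)) * hkey
  refine ⟨hden_pos, hne, heq, ?_⟩
  rw [heq]
  apply div_neg_of_neg_of_pos _ hden_pos
  have h4 : 0 < Real.exp (Real.pi*ζ) := Real.exp_pos _
  have h5 : 0 < Real.cosh (Real.pi*ζ) := Real.cosh_pos _
  have := mul_pos (mul_pos h4 h5) hsin2
  linarith
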